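/- Let A be a bounded positive operator with trivial kernel on a Hilbert space, h̄ a self-adjoint operator, and ψ ≠ 0 a vector that is not an eigenvector of h̄. Then for any nontrivial interval (t₁, t₂) ⊂ ℝ, inf_{e ∈ ℝ₊} ∫_{t₁}^{t₂} ‖A(1 − e^{−it(h̄ − e)})ψ‖² dt > 0. -/

import Mathlib

open intervalIntegral

set_option maxHeartbeats 2000000

/-- Let `A` be a bounded positive operator with trivial kernel on a
Hilbert space, `h̄` a self-adjoint operator generating the unitary group
`U t = e^{ith̄}` (so `e^{−it(h̄−e)}ψ = e^{ite} U(−t)ψ`), and `ψ ≠ 0` a vector that is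
not an eigenvector of `h̄`. Then for any nontrivial interval `(t₁, t₂)`,
`inf_{e ∈ ℝ₊} ∫_{t₁}^{t₂} ‖A(1 − e^{−it(h̄−e)})ψ‖² dt > 0`. -/
theorem oscillation_integral_uniformly_positive
    {H : Type*} [NormedAddCommGroup H] [InnerProductSpace ℂ H] [CompleteSpace H]
    (A : H →L[ℂ] H) (hApos : A.IsPositive) (hAker : ∀ x : H, A x = 0 → x = 0)
    (hbar : H →ₗ[ℂ] H)
    (hsym : ∀ x y : H, (inner ℂ (hbar x) y : ℂ) = inner ℂ x (hbar y))
    (U : ℝ → H →L[ℂ] H) (hU0 : U 0 = 1)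
    (hUgrp : ∀ s t : ℝ, ∀ x : H, U (s + t) x = U s (U t x))
    (hUiso : ∀ (t : ℝ) (x : H), ‖U t x‖ = ‖x‖)
    (hUgen : ∀ (t : ℝ) (x : H),
      HasDerivAt (fun s : ℝ => U s x) (Complex.I • hbar (U t x)) t)
    (ψ : H) (hψ : ψ ≠ 0)
    (hnoteig : ¬∃ lam : ℝ, ∀ t : ℝ,
      U t ψ = Complex.exp (Complex.I * (lam : ℂ) * (t : ℂ)) • ψ)
    (t₁ t₂ : ℝ) (h12 : t₁ < t₂) :
    ∃ c : ℝ, 0 < c ∧ ∀ e : ℝ, 0 ≤ e →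
      c ≤ ∫ t in t₁..t₂,
        ‖A (ψ - Complex.exp (Complex.I * (t : ℂ) * (e : ℂ)) • U (-t) ψ)‖ ^ 2 := by
  classical
  have hUinv : ∀ (t : ℝ) (x : H), U t (U (-t) x) = x := by
    intro t x
    rw [← hUgrp]
    simp [hU0]
  have contUψ : Continuous fun s : ℝ => U s ψ :=
    continuous_iff_continuousAt.2 fun t => (hUgen t ψ).continuousAt
  have cont_f : Continuous fun t : ℝ => U (-t) ψ := contUψ.comp continuous_neg
  set g : ℝ → ℝ → H := fun e t =>
    ψ - Complex.exp (Complex.I * (t : ℂ) * (e : ℂ)) • U (-t) ψ with hgdef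
  clear_value g
  have cexp : Continuous fun p : ℝ × ℝ => Complex.exp (Complex.I * (p.2 : ℂ) * (p.1 : ℂ)) :=
    Complex.continuous_exp.comp
      (((continuous_const.mul (Complex.continuous_ofReal.comp continuous_snd)).mul
        (Complex.continuous_ofReal.comp continuous_fst)))
  have cont_g : Continuous fun p : ℝ × ℝ => g p.1 p.2 := by
    simp only [hgdef]
    exact continuous_const.sub (cexp.smul (cont_f.comp continuous_snd))
  have contInt : Continuous fun p : ℝ × ℝ => ‖A (g p.1 p.2)‖ ^ 2 :=
    ((A.continuous.comp cont_g).norm.pow 2)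
  set Fn : ℝ → ℝ := fun e => ∫ t in t₁..t₂, ‖A (g e t)‖ ^ 2 with hFndef
  clear_value Fn
  have hFcont : Continuous Fn := by
    simp only [hFndef]
    apply intervalIntegral.continuous_parametric_intervalIntegral_of_continuous'
      (f := fun e t => ‖A (g e t)‖ ^ 2) (μ := MeasureTheory.volume)
    exact contInt
  have hIcont : ∀ e : ℝ, Continuous fun t => ‖A (g e t)‖ ^ 2 := by
    intro e
    exact contInt.comp (continuous_const.prodMk continuous_id)
  have hgcont : ∀ e : ℝ, Continuous fun t => g e t := by
    intro e
    exact cont_g.comp (continuous_const.prodMk continuous_id)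
  -- pointwise positivity of Fn
  have hFpos : ∀ e : ℝ, 0 < Fn e := by
    intro e
    have hexists : ∃ t₀ ∈ Set.Ioo t₁ t₂, g e t₀ ≠ 0 := by
      by_contra hcon
      push_neg at hcon
      apply hnoteig
      refine ⟨e, ?_⟩
      have hval : ∀ t ∈ Set.Ioo t₁ t₂,
          U (-t) ψ = Complex.exp (-(Complex.I * (t : ℂ) * (e : ℂ))) • ψ := by
        intro t ht
        have h0 := hcon t ht
        simp only [hgdef] at h0
        have h1 : Complex.exp (Complex.I * (t : ℂ) * (e : ℂ)) • U (-t) ψ = ψ := by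
          have := sub_eq_zero.mp h0
          exact this.symm
        calc U (-t) ψ
            = Complex.exp (-(Complex.I * (t : ℂ) * (e : ℂ))) •
              (Complex.exp (Complex.I * (t : ℂ) * (e : ℂ)) • U (-t) ψ) := by
              rw [smul_smul, ← Complex.exp_add]
              simp
          _ = Complex.exp (-(Complex.I * (t : ℂ) * (e : ℂ))) • ψ := by rw [h1]
      set δ : ℝ := (t₂ - t₁) / 2 with hδdef
      have hδ : 0 < δ := by simp [hδdef]; linarith
      set m : ℝ := (t₁ + t₂) / 2 with hmdef
      have hm : m ∈ Set.Ioo t₁ t₂ := by constructor <;> (simp [hmdef]; linarith)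
      have hms : ∀ s : ℝ, |s| < δ → m + s ∈ Set.Ioo t₁ t₂ := by
        intro s hs
        rw [abs_lt] at hs
        constructor <;> (simp [hmdef, hδdef] at *; linarith)
      have hsmall' : ∀ s : ℝ, |s| < δ →
          U (-s) ψ = Complex.exp (-(Complex.I * (s : ℂ) * (e : ℂ))) • ψ := by
        intro s hs
        have h1 : U (-(m + s)) ψ = U (-s) (U (-m) ψ) := by
          rw [← hUgrp]
          ring_nf
        have h2 := hval (m + s) (hms s hs)
        have h3 := hval m hm
        rw [h2, h3, map_smul] at h1
        -- h1 : exp(-(I(m+s)e)) • ψ = exp(-(I m e)) • U (-s) ψ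
        have h4 : U (-s) ψ =
            (Complex.exp (-(Complex.I * ((m:ℂ)) * (e:ℂ))))⁻¹ •
              (Complex.exp (-(Complex.I * ((m + s : ℝ) : ℂ) * (e:ℂ))) • ψ) := by
          rw [h1, smul_smul, inv_mul_cancel₀ (Complex.exp_ne_zero _), one_smul]
        rw [h4, smul_smul, ← Complex.exp_neg, ← Complex.exp_add]
        congr 2
        push_cast
        ring
      have hsmall : ∀ s : ℝ, |s| < δ →
          U s ψ = Complex.exp (Complex.I * (s : ℂ) * (e : ℂ)) • ψ := by
        intro s hs
        have := hsmall' (-s) (by rwa [abs_neg])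
        rw [neg_neg] at this
        rw [this]
        congr 2
        push_cast
        ring
      have hmul : ∀ (n : ℕ) (s : ℝ), |s| < δ →
          U ((n : ℝ) * s) ψ = Complex.exp (Complex.I * ((n : ℝ) * s : ℝ) * (e : ℂ)) • ψ := by
        intro n
        induction n with
        | zero => intro s _; simp [hU0]
        | succ n ih =>
          intro s hs
          have hsum : ((n + 1 : ℕ) : ℝ) * s = s + (n : ℝ) * s := by push_cast; ring
          rw [hsum, hUgrp, ih s hs, map_smul, hsmall s hs, smul_smul, ← Complex.exp_add]
          congr 2
          push_cast
          ring
      intro t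
      obtain ⟨n, hn⟩ := exists_nat_gt (|t| / δ)
      have hn0 : 0 < (n : ℝ) := lt_of_le_of_lt (div_nonneg (abs_nonneg _) hδ.le) hn
      have hsn : |t / (n : ℝ)| < δ := by
        rw [abs_div, abs_of_pos hn0, div_lt_iff₀ hn0]
        have := (div_lt_iff₀ hδ).mp hn
        nlinarith
      have := hmul n (t / (n : ℝ)) hsn
      rw [mul_div_cancel₀ _ (ne_of_gt hn0)] at this
      rw [this]
      congr 2
      push_cast
      ring
    obtain ⟨t₀, ht₀, hgne⟩ := hexists
    have hAne : A (g e t₀) ≠ 0 := fun h => hgne (hAker _ h)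
    have hpos₀ : 0 < ‖A (g e t₀)‖ ^ 2 := pow_pos (norm_pos_iff.mpr hAne) 2
    have hopen : IsOpen ((fun t => ‖A (g e t)‖ ^ 2) ⁻¹' Set.Ioi 0 ∩ Set.Ioo t₁ t₂) :=
      ((isOpen_Ioi).preimage (hIcont e)).inter isOpen_Ioo
    obtain ⟨ε, hε, hball⟩ := Metric.isOpen_iff.mp hopen t₀ ⟨hpos₀, ht₀⟩
    have hball' : Set.Ioo (t₀ - ε) (t₀ + ε) ⊆
        (fun t => ‖A (g e t)‖ ^ 2) ⁻¹' Set.Ioi 0 ∩ Set.Ioo t₁ t₂ := by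
      rwa [← Real.ball_eq_Ioo]
    set a : ℝ := t₀ - ε / 2 with hadef
    set b : ℝ := t₀ + ε / 2 with hbdef
    have hab : a < b := by simp only [hadef, hbdef]; linarith
    have hsub : Set.Ioo a b ⊆
        (fun t => ‖A (g e t)‖ ^ 2) ⁻¹' Set.Ioi 0 ∩ Set.Ioo t₁ t₂ := by
      intro x hx
      apply hball'
      obtain ⟨hx1, hx2⟩ := hx
      constructor <;> simp only [hadef, hbdef] at hx1 hx2 <;> linarith
    have haI : a ∈ Set.Ioo t₁ t₂ :=
      (hball' ⟨by simp only [hadef]; linarith, by simp only [hadef]; linarith⟩).2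
    have hbI : b ∈ Set.Ioo t₁ t₂ :=
      (hball' ⟨by simp only [hbdef]; linarith, by simp only [hbdef]; linarith⟩).2
    have hint : ∀ x y : ℝ, IntervalIntegrable (fun t => ‖A (g e t)‖ ^ 2)
        MeasureTheory.volume x y := fun x y => (hIcont e).intervalIntegrable x y
    have hmid : 0 < ∫ t in a..b, ‖A (g e t)‖ ^ 2 :=
      intervalIntegral_pos_of_pos_on (hint a b) (fun x hx => (hsub hx).1) hab
    have hleft : 0 ≤ ∫ t in t₁..a, ‖A (g e t)‖ ^ 2 :=
      intervalIntegral.integral_nonneg haI.1.le (fun u _ => by positivity)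
    have hright : 0 ≤ ∫ t in b..t₂, ‖A (g e t)‖ ^ 2 :=
      intervalIntegral.integral_nonneg hbI.2.le (fun u _ => by positivity)
    have hsplit : Fn e = ((∫ t in t₁..a, ‖A (g e t)‖ ^ 2) + ∫ t in a..b, ‖A (g e t)‖ ^ 2)
        + ∫ t in b..t₂, ‖A (g e t)‖ ^ 2 := by
      simp only [hFndef]
      rw [integral_add_adjacent_intervals (hint t₁ a) (hint a b),
        integral_add_adjacent_intervals (hint t₁ b) (hint b t₂)]
    linarith
  -- averaged oscillation vector
  set v : ℝ → H := fun e => ∫ t in t₁..t₂,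
      Complex.exp (Complex.I * (t : ℂ) * (e : ℂ)) • U (-t) ψ with hvdef
  clear_value v
  have hpos : (0:ℝ) < t₂ - t₁ := by linarith
  have hexpc : ∀ e : ℝ,
      Continuous fun t : ℝ => Complex.exp (Complex.I * (t : ℂ) * (e : ℂ)) • U (-t) ψ := by
    intro e
    exact (Complex.continuous_exp.comp
      ((continuous_const.mul Complex.continuous_ofReal).mul continuous_const)).smul cont_f
  have hAint : ∀ e : ℝ, A ((t₂ - t₁) • ψ - v e) = ∫ t in t₁..t₂, A (g e t) := by
    intro e
    have h1 : (∫ t in t₁..t₂, g e t) = (t₂ - t₁) • ψ - v e := by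
      simp only [hgdef, hvdef]
      rw [intervalIntegral.integral_sub intervalIntegrable_const
        ((hexpc e).intervalIntegrable _ _), intervalIntegral.integral_const]
    rw [← h1]
    exact (A.intervalIntegral_comp_comm ((hgcont e).intervalIntegrable _ _)).symm
  -- Cauchy-Schwarz lower bound
  have hCS : ∀ e : ℝ, ‖A ((t₂ - t₁) • ψ - v e)‖ ^ 2 ≤ (t₂ - t₁) * Fn e := by
    intro e
    have hwc : Continuous fun t => ‖A (g e t)‖ := (A.continuous.comp (hgcont e)).norm
    have hInorm : IntervalIntegrable (fun t => ‖A (g e t)‖)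
        MeasureTheory.volume t₁ t₂ := hwc.intervalIntegrable _ _
    have hInorm2 : IntervalIntegrable (fun t => ‖A (g e t)‖ ^ 2)
        MeasureTheory.volume t₁ t₂ := (hIcont e).intervalIntegrable _ _
    set I1 : ℝ := ∫ t in t₁..t₂, ‖A (g e t)‖ with hI1def
    have h1 : ‖A ((t₂ - t₁) • ψ - v e)‖ ≤ I1 := by
      rw [hAint e, hI1def]
      exact intervalIntegral.norm_integral_le_integral_norm h12.le
    have hI1nn : 0 ≤ I1 :=
      intervalIntegral.integral_nonneg h12.le fun u _ => norm_nonneg _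
    have key : 0 ≤ ∫ t in t₁..t₂, ((t₂ - t₁) * ‖A (g e t)‖ - I1) ^ 2 :=
      intervalIntegral.integral_nonneg h12.le fun u _ => sq_nonneg _
    have expand : (∫ t in t₁..t₂, ((t₂ - t₁) * ‖A (g e t)‖ - I1) ^ 2)
        = (t₂ - t₁) ^ 2 * Fn e - 2 * (t₂ - t₁) * I1 * I1 + (t₂ - t₁) * I1 ^ 2 := by
      have hptw : ∀ t : ℝ, ((t₂ - t₁) * ‖A (g e t)‖ - I1) ^ 2
          = (t₂ - t₁) ^ 2 * ‖A (g e t)‖ ^ 2 - 2 * (t₂ - t₁) * I1 * ‖A (g e t)‖ + I1 ^ 2 :=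
        fun t => by ring
      simp only [hptw]
      rw [intervalIntegral.integral_add
          ((hInorm2.const_mul _).sub (hInorm.const_mul _)) intervalIntegrable_const,
        intervalIntegral.integral_sub (hInorm2.const_mul _) (hInorm.const_mul _),
        intervalIntegral.integral_const_mul, intervalIntegral.integral_const_mul,
        intervalIntegral.integral_const, smul_eq_mul, hFndef, hI1def]
    have h2 : I1 ^ 2 ≤ (t₂ - t₁) * Fn e := by
      rw [expand] at key
      nlinarith [key, hpos]
    calc ‖A ((t₂ - t₁) • ψ - v e)‖ ^ 2 ≤ I1 ^ 2 :=
          pow_le_pow_left₀ (norm_nonneg _) h1 2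
      _ ≤ (t₂ - t₁) * Fn e := h2
  -- Riemann-Lebesgue: v e → 0 as e → ∞
  have hv0 : Filter.Tendsto v Filter.atTop (nhds 0) := by
    have hRL := Real.tendsto_integral_exp_smul_cocompact
      ((Set.Ioc t₁ t₂).indicator fun t => U (-t) ψ)
    have hmap : Filter.Tendsto (fun e : ℝ => -e / (2 * Real.pi))
        Filter.atTop (Filter.cocompact ℝ) := by
      rw [cocompact_eq_atBot_atTop]
      refine Filter.Tendsto.mono_right ?_ le_sup_left
      have hneg : Filter.Tendsto (fun e : ℝ => -e) Filter.atTop Filter.atBot := Filter.tendsto_neg_atTop_atBot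
      exact Filter.Tendsto.atBot_div_const Real.two_pi_pos hneg
    have hcomp := hRL.comp hmap
    refine hcomp.congr fun e => ?_
    have hptw : ∀ t : ℝ,
        (Real.fourierChar (-(t * (-e / (2 * Real.pi))))) •
          (Set.Ioc t₁ t₂).indicator (fun t => U (-t) ψ) t
        = (Set.Ioc t₁ t₂).indicator
            (fun t => Complex.exp (Complex.I * (t : ℂ) * (e : ℂ)) • U (-t) ψ) t := by
      intro t
      have harg : 2 * Real.pi * (-(t * (-e / (2 * Real.pi)))) = t * e := by
        have hπ : Real.pi ≠ 0 := Real.pi_ne_zero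
        field_simp
      have hchar : ((Real.fourierChar (-(t * (-e / (2 * Real.pi))))) : ℂ)
          = Complex.exp (Complex.I * (t : ℂ) * (e : ℂ)) := by
        rw [Real.fourierChar_apply, harg]
        congr 1
        push_cast
        ring
      by_cases ht : t ∈ Set.Ioc t₁ t₂
      · rw [Set.indicator_of_mem ht, Set.indicator_of_mem ht, Circle.smul_def, hchar]
      · rw [Set.indicator_of_notMem ht, Set.indicator_of_notMem ht, smul_zero]
    show (∫ t : ℝ, (Real.fourierChar (-(t * (-e / (2 * Real.pi))))) •
        (Set.Ioc t₁ t₂).indicator (fun t => U (-t) ψ) t) = v e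
    rw [MeasureTheory.integral_congr_ae (Filter.Eventually.of_forall hptw),
      MeasureTheory.integral_indicator measurableSet_Ioc, hvdef]
    exact (intervalIntegral.integral_of_le h12.le).symm
  -- final assembly
  have hAψ : A ψ ≠ 0 := fun h => hψ (hAker ψ h)
  set L : ℝ := (t₂ - t₁) * ‖A ψ‖ with hLdef
  have hL : 0 < L := mul_pos hpos (norm_pos_iff.mpr hAψ)
  have hεpos : 0 < L / (2 * (‖A‖ + 1)) := by positivity
  have hev : ∀ᶠ e in Filter.atTop, ‖v e‖ < L / (2 * (‖A‖ + 1)) := by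
    have hn := hv0.norm
    rw [norm_zero] at hn
    exact hn.eventually_lt_const hεpos
  obtain ⟨E, hE⟩ := Filter.eventually_atTop.mp hev
  set E' : ℝ := max E 0 with hE'def
  obtain ⟨e₀, he₀, hmin⟩ := (isCompact_Icc (a := (0:ℝ)) (b := E')).exists_isMinOn
    (Set.nonempty_Icc.mpr (le_max_right E 0)) hFcont.continuousOn
  have hFn_eq : ∀ e : ℝ, Fn e = ∫ t in t₁..t₂,
      ‖A (ψ - Complex.exp (Complex.I * (t : ℂ) * (e : ℂ)) • U (-t) ψ)‖ ^ 2 := by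
    intro e
    rw [hFndef, hgdef]
  refine ⟨min ((L / 2) ^ 2 / (t₂ - t₁)) (Fn e₀),
    lt_min (by positivity) (hFpos e₀), ?_⟩
  intro e he
  rw [← hFn_eq e]
  rcases le_total e E' with hcase | hcase
  · exact le_trans (min_le_right _ _) (hmin ⟨he, hcase⟩)
  · have heE : E ≤ e := le_trans (le_max_left E 0) hcase
    have hve : ‖v e‖ < L / (2 * (‖A‖ + 1)) := hE e heE
    have hAv : ‖A (v e)‖ ≤ L / 2 := by
      have h1 : ‖A (v e)‖ ≤ ‖A‖ * ‖v e‖ := A.le_opNorm _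
      have h2 : ‖A‖ * ‖v e‖ ≤ ‖A‖ * (L / (2 * (‖A‖ + 1))) :=
        mul_le_mul_of_nonneg_left hve.le (norm_nonneg _)
      have h3 : ‖A‖ * (L / (2 * (‖A‖ + 1))) ≤ L / 2 := by
        rw [mul_comm, div_mul_eq_mul_div, div_le_div_iff₀ (by positivity) two_pos]
        nlinarith [norm_nonneg A, hL]
      linarith
    have hATψ : ‖A ((t₂ - t₁) • ψ)‖ = L := by
      rw [A.map_smul_of_tower, norm_smul, Real.norm_eq_abs, abs_of_pos hpos, hLdef]
    have hlow : L / 2 ≤ ‖A ((t₂ - t₁) • ψ - v e)‖ := by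
      have h2 := norm_sub_norm_le (A ((t₂ - t₁) • ψ)) (A (v e))
      rw [← map_sub] at h2
      rw [hATψ] at h2
      linarith
    have hsq : (L / 2) ^ 2 ≤ ‖A ((t₂ - t₁) • ψ - v e)‖ ^ 2 :=
      pow_le_pow_left₀ (by positivity) hlow 2
    have hfin : (L / 2) ^ 2 / (t₂ - t₁) ≤ Fn e := by
      rw [div_le_iff₀ hpos]
      have := hCS e
      nlinarith [hsq, this]
    exact le_trans (min_le_left _ _) hfin
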